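/- The prederivative operator is bilinear in the vector and satisfies the norm bound ‖P_v(J)‖_{B^{r+1}} ≤ ‖v‖·‖J‖_{B^r} for all differential k-chains J ∈ B̂_k^r, vectors v ∈ ℝⁿ, and r ≥ 1. In particular, the sequence (T_{v/i} − I)(p; i·α) is Cauchy in the B² norm, so P_v(p;α) := lim_{i→∞} (T_{v/i} − I)(p; iα) is well-defined. -/

import Mathlib

noncomputable section

open Finsupp Filter

variable {E W : Type*} [NormedAddCommGroup E] [NormedSpace ℝ E]
  [NormedAddCommGroup W] [NormedSpace ℝ W]

/-- Translation of a Dirac chain through the vector `u`. -/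
def transl (u : E) (A : E →₀ W) : E →₀ W := Finsupp.mapDomain (· + u) A

/-- The difference operator `Δ_u = T_u - I`. -/
def del (u : E) (A : E →₀ W) : E →₀ W := transl u A - A

/-- Iterated difference chain along a list of vectors. -/
def diff : List E → (E →₀ W) → (E →₀ W)
  | [], A => A
  | u :: σ, A => del u (diff σ A)

/-- The product of the norms of the vectors in the list `σ`. -/
def lnorm (σ : List E) : ℝ := (σ.map norm).prod

/-- Costs of representations of `A` as sums of `j`-difference chains with `j ≤ r`. -/
def reps (r : ℕ) (A : E →₀ W) : Set ℝ :=
  {c | ∃ (m : ℕ) (σ : Fin m → List E) (p : Fin m → E) (α : Fin m → W),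
      (∀ i, (σ i).length ≤ r) ∧
      A = ∑ i, diff (σ i) (Finsupp.single (p i) (α i)) ∧
      c = ∑ i, lnorm (σ i) * ‖α i‖}

/-- The `B^r` norm of a Dirac chain. -/
def Bnorm (r : ℕ) (A : E →₀ W) : ℝ := sInf (reps r A)

/-- `M` is a `B^r`-bound for the cochain (differential form) `ω`. -/
def IsFormBound (r : ℕ) (ω : (E →₀ W) →ₗ[ℝ] ℝ) (M : ℝ) : Prop :=
  ∀ (σ : List E) (p : E) (α : W), σ.length ≤ r →
    |ω (diff σ (Finsupp.single p α))| ≤ M * lnorm σ * ‖α‖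

/-- The `B^r` norm of a differential form. -/
def formNorm (r : ℕ) (ω : (E →₀ W) →ₗ[ℝ] ℝ) : ℝ :=
  sInf {M | 0 ≤ M ∧ IsFormBound r ω M}

open Topology

-- AUX
set_option linter.unusedSectionVars false
namespace PredAux

variable {E W : Type*} [NormedAddCommGroup E] [NormedSpace ℝ E]
  [NormedAddCommGroup W] [NormedSpace ℝ W]

/-- `del u` as a linear map. -/
def delL (u : E) : (E →₀ W) →ₗ[ℝ] (E →₀ W) :=
  Finsupp.lmapDomain W ℝ (· + u) - LinearMap.id

lemma del_eq (u : E) (A : E →₀ W) : del u A = delL u A := rfl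

lemma del_single (u : E) (q : E) (α : W) :
    del u (Finsupp.single q α) = Finsupp.single (q + u) α - Finsupp.single q α := by
  simp [del, transl, Finsupp.mapDomain_single]

lemma del_zero_vec (A : E →₀ W) : del (0 : E) A = 0 := by
  rw [del, transl, show ((· + (0:E)) : E → E) = id from funext fun x => add_zero x,
    Finsupp.mapDomain_id, sub_self]

lemma lnorm_nonneg (σ : List E) : 0 ≤ lnorm σ := by
  induction σ with
  | nil => simp [lnorm]
  | cons u σ ih => simpa [lnorm] using mul_nonneg (norm_nonneg u) ih

lemma lnorm_cons (u : E) (σ : List E) : lnorm (u :: σ) = ‖u‖ * lnorm σ := by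
  simp [lnorm]

lemma diff_smul (σ : List E) (c : ℝ) (A : E →₀ W) :
    diff σ (c • A) = c • diff σ A := by
  induction σ with
  | nil => rfl
  | cons u σ ih => simp only [diff, ih, del_eq, map_smul]

lemma reps_nonneg {r : ℕ} {A : E →₀ W} {c : ℝ} (hc : c ∈ reps r A) : 0 ≤ c := by
  obtain ⟨m, σ, p, α, -, -, rfl⟩ := hc
  exact Finset.sum_nonneg fun i _ => mul_nonneg (lnorm_nonneg _) (norm_nonneg _)

lemma bddBelow_reps (r : ℕ) (A : E →₀ W) : BddBelow (reps r A) :=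
  ⟨0, fun c hc => reps_nonneg hc⟩

lemma zero_mem_reps (r : ℕ) : (0 : ℝ) ∈ reps r (0 : E →₀ W) :=
  ⟨0, ![], ![], ![], by simp, by simp, by simp⟩

lemma diff_mem_reps {r : ℕ} {σ : List E} (h : σ.length ≤ r) (p : E) (α : W) :
    lnorm σ * ‖α‖ ∈ reps r (diff σ (Finsupp.single p α)) :=
  ⟨1, ![σ], ![p], ![α], by simpa using h, by simp, by simp⟩

lemma add_mem_reps {r : ℕ} {A B : E →₀ W} {a b : ℝ}
    (ha : a ∈ reps r A) (hb : b ∈ reps r B) : a + b ∈ reps r (A + B) := by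
  obtain ⟨m₁, σ₁, p₁, α₁, h₁, rfl, rfl⟩ := ha
  obtain ⟨m₂, σ₂, p₂, α₂, h₂, rfl, rfl⟩ := hb
  refine ⟨m₁ + m₂, Fin.append σ₁ σ₂, Fin.append p₁ p₂, Fin.append α₁ α₂, ?_, ?_, ?_⟩
  · intro i
    cases i using Fin.addCases with
    | left j => rw [Fin.append_left]; exact h₁ j
    | right j => rw [Fin.append_right]; exact h₂ j
  · rw [Fin.sum_univ_add]
    congr 1
    · exact Finset.sum_congr rfl fun j _ => by simp only [Fin.append_left]
    · exact Finset.sum_congr rfl fun j _ => by simp only [Fin.append_right]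
  · rw [Fin.sum_univ_add]
    congr 1
    · exact Finset.sum_congr rfl fun j _ => by simp only [Fin.append_left]
    · exact Finset.sum_congr rfl fun j _ => by simp only [Fin.append_right]

lemma reps_nonempty (r : ℕ) (A : E →₀ W) : (reps r A).Nonempty := by
  induction A using Finsupp.induction with
  | zero => exact ⟨0, zero_mem_reps r⟩
  | single_add p α A hp hα ih =>
      obtain ⟨c, hc⟩ := ih
      exact ⟨lnorm [] * ‖α‖ + c,
        add_mem_reps (by
          simpa [diff] using diff_mem_reps (σ := ([] : List E)) (Nat.zero_le r) p α) hc⟩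

lemma Bnorm_le_of_mem {r : ℕ} {A : E →₀ W} {c : ℝ} (hc : c ∈ reps r A) :
    Bnorm r A ≤ c := csInf_le (bddBelow_reps r A) hc

lemma Bnorm_nonneg (r : ℕ) (A : E →₀ W) : 0 ≤ Bnorm r A :=
  le_csInf (reps_nonempty r A) fun _ hc => reps_nonneg hc

lemma Bnorm_zero (r : ℕ) : Bnorm r (0 : E →₀ W) = 0 :=
  le_antisymm (Bnorm_le_of_mem (zero_mem_reps r)) (Bnorm_nonneg r 0)

lemma Bnorm_add_le (r : ℕ) (A B : E →₀ W) :
    Bnorm r (A + B) ≤ Bnorm r A + Bnorm r B := by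
  have h1 : ∀ a ∈ reps r A, Bnorm r (A + B) - a ≤ Bnorm r B := by
    intro a ha
    refine le_csInf (reps_nonempty r B) fun b hb => ?_
    have := Bnorm_le_of_mem (add_mem_reps ha hb)
    linarith
  have h2 : Bnorm r (A + B) - Bnorm r B ≤ Bnorm r A := by
    refine le_csInf (reps_nonempty r A) fun a ha => ?_
    have := h1 a ha; linarith
  linarith

lemma Bnorm_smul_le (r : ℕ) (c : ℝ) (A : E →₀ W) :
    Bnorm r (c • A) ≤ |c| * Bnorm r A := by
  have key : ∀ a ∈ reps r A, Bnorm r (c • A) ≤ |c| * a := by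
    intro a ha
    obtain ⟨m, σ, p, α, h1, rfl, rfl⟩ := ha
    refine Bnorm_le_of_mem ⟨m, σ, p, fun i => c • α i, h1, ?_, ?_⟩
    · rw [Finset.smul_sum]
      refine Finset.sum_congr rfl fun i _ => ?_
      rw [← diff_smul, Finsupp.smul_single]
    · rw [Finset.mul_sum]
      refine Finset.sum_congr rfl fun i _ => ?_
      rw [norm_smul]; simp [Real.norm_eq_abs]; ring
  rcases eq_or_ne c 0 with rfl | hc
  · simp [Bnorm_zero]
  · have : Bnorm r (c • A) / |c| ≤ Bnorm r A := by
      refine le_csInf (reps_nonempty r A) fun a ha => ?_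
      rw [div_le_iff₀ (abs_pos.mpr hc)]
      have := key a ha; linarith [key a ha]
    calc Bnorm r (c • A) = |c| * (Bnorm r (c • A) / |c|) := by
          field_simp
      _ ≤ |c| * Bnorm r A := by
          exact mul_le_mul_of_nonneg_left this (abs_nonneg c)

lemma Bnorm_neg_le (r : ℕ) (A : E →₀ W) : Bnorm r (-A) ≤ Bnorm r A := by
  have := Bnorm_smul_le r (-1) A
  simpa using this

lemma Bnorm_sub_le (r : ℕ) (A B : E →₀ W) :
    Bnorm r (A - B) ≤ Bnorm r A + Bnorm r B := by
  rw [sub_eq_add_neg]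
  exact (Bnorm_add_le r A (-B)).trans (by linarith [Bnorm_neg_le r B])

lemma Bnorm_sum_le {ι : Type*} (r : ℕ) (s : Finset ι) (F : ι → (E →₀ W)) (C : ι → ℝ)
    (h : ∀ i ∈ s, Bnorm r (F i) ≤ C i) :
    Bnorm r (∑ i ∈ s, F i) ≤ ∑ i ∈ s, C i := by
  classical
  induction s using Finset.induction with
  | empty => simp [Bnorm_zero]
  | insert _ _ hx ih =>
      rename_i x s
      rw [Finset.sum_insert hx, Finset.sum_insert hx]
      exact (Bnorm_add_le r _ _).trans
        (add_le_add (h x (Finset.mem_insert_self x s))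
          (ih fun i hi => h i (Finset.mem_insert_of_mem hi)))

lemma Bnorm_del_le (r : ℕ) (u : E) (A : E →₀ W) :
    Bnorm (r + 1) (del u A) ≤ ‖u‖ * Bnorm r A := by
  have key : ∀ a ∈ reps r A, Bnorm (r + 1) (del u A) ≤ ‖u‖ * a := by
    intro a ha
    obtain ⟨m, σ, p, α, h1, rfl, rfl⟩ := ha
    refine Bnorm_le_of_mem ⟨m, fun i => u :: σ i, p, α, fun i => ?_, ?_, ?_⟩
    · simpa using Nat.add_le_add_right (h1 i) 1
    · rw [del_eq, map_sum]
      rfl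
    · rw [Finset.mul_sum]
      refine Finset.sum_congr rfl fun i _ => ?_
      rw [lnorm_cons]; ring
  rcases eq_or_ne u 0 with rfl | hu
  · simp [del_zero_vec, Bnorm_zero]
  · have hun : (0:ℝ) < ‖u‖ := norm_pos_iff.mpr hu
    have : Bnorm (r + 1) (del u A) / ‖u‖ ≤ Bnorm r A := by
      refine le_csInf (reps_nonempty r A) fun a ha => ?_
      rw [div_le_iff₀ hun]
      linarith [key a ha]
    calc Bnorm (r+1) (del u A) = ‖u‖ * (Bnorm (r+1) (del u A) / ‖u‖) := by
          field_simp
      _ ≤ ‖u‖ * Bnorm r A := mul_le_mul_of_nonneg_left this (norm_nonneg u)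

end PredAux

set_option linter.unusedSectionVars false
namespace PredAux
variable {E W : Type*} [NormedAddCommGroup E] [NormedSpace ℝ E]
  [NormedAddCommGroup W] [NormedSpace ℝ W]

lemma single_tele (u : E) (α : W) (q : E) (k : ℕ) :
    Finsupp.single (q + k • u) α - Finsupp.single q α
      = ∑ l ∈ Finset.range k, del u (Finsupp.single (q + l • u) α) := by
  induction k with
  | zero => simp
  | succ k ih =>
      rw [Finset.sum_range_succ, ← ih, del_single,
        show q + (k + 1) • u = q + k • u + u by rw [succ_nsmul, add_assoc]]
      abel

lemma Bnorm_del_tele (u : E) (α : W) (q : E) (d : ℕ) :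
    Bnorm 2 (del u (Finsupp.single (q + d • u) α - Finsupp.single q α))
      ≤ d * (‖u‖ * ‖u‖ * ‖α‖) := by
  rw [single_tele, del_eq, map_sum]
  have h : ∀ l ∈ Finset.range d,
      Bnorm 2 (delL (W := W) u (del u (Finsupp.single (q + l • u) α)))
        ≤ ‖u‖ * ‖u‖ * ‖α‖ := by
    intro l _
    have h := Bnorm_le_of_mem (diff_mem_reps (σ := [u, u]) (r := 2) (by simp) (q + l • u) α)
    simp only [diff, lnorm, List.map_cons, List.map_nil, List.prod_cons, List.prod_nil,
      mul_one] at h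
    calc Bnorm 2 (delL (W := W) u (del u (Finsupp.single (q + l • u) α)))
        = Bnorm 2 (del u (del u (Finsupp.single (q + l • u) α))) := rfl
      _ ≤ ‖u‖ * (‖u‖ * 1) * ‖α‖ := by simpa [lnorm] using h
      _ = ‖u‖ * ‖u‖ * ‖α‖ := by ring
  calc Bnorm 2 (∑ l ∈ Finset.range d, delL (W := W) u (del u (Finsupp.single (q + l • u) α)))
      ≤ ∑ _l ∈ Finset.range d, (‖u‖ * ‖u‖ * ‖α‖) := Bnorm_sum_le 2 _ _ _ h
    _ = d * (‖u‖ * ‖u‖ * ‖α‖) := by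
        rw [Finset.sum_const, Finset.card_range, nsmul_eq_mul]

lemma Bnorm_pair_aux (u : E) (α : W) (p : E) {l s : ℕ} (hsl : s ≤ l) :
    Bnorm 2 (del u (Finsupp.single (p + l • u) α) - del u (Finsupp.single (p + s • u) α))
      ≤ ((l : ℝ) + s) * (‖u‖ * ‖u‖ * ‖α‖) := by
  have c0 : (0:ℝ) ≤ ‖u‖ * ‖u‖ * ‖α‖ := by positivity
  have key : del u (Finsupp.single (p + l • u) α) - del u (Finsupp.single (p + s • u) α)
      = del u (Finsupp.single ((p + s • u) + (l - s) • u) α - Finsupp.single (p + s • u) α) := by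
    rw [del_eq, del_eq, del_eq, ← map_sub]
    congr 2
    rw [add_assoc, ← add_nsmul, Nat.add_sub_cancel' hsl]
  rw [key]
  refine (Bnorm_del_tele u α _ (l - s)).trans (mul_le_mul_of_nonneg_right ?_ c0)
  calc ((l - s : ℕ) : ℝ) ≤ (l : ℝ) := by exact_mod_cast Nat.sub_le l s
    _ ≤ (l : ℝ) + s := le_add_of_nonneg_right (by positivity)

lemma Bnorm_pair (u : E) (α : W) (p : E) (l s : ℕ) :
    Bnorm 2 (del u (Finsupp.single (p + l • u) α) - del u (Finsupp.single (p + s • u) α))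
      ≤ ((l : ℝ) + s) * (‖u‖ * ‖u‖ * ‖α‖) := by
  rcases le_total s l with h | h
  · exact Bnorm_pair_aux u α p h
  · have := Bnorm_pair_aux u α p h
    calc Bnorm 2 (del u (Finsupp.single (p + l • u) α) - del u (Finsupp.single (p + s • u) α))
        = Bnorm 2 (-(del u (Finsupp.single (p + s • u) α) - del u (Finsupp.single (p + l • u) α))) := by
          rw [neg_sub]
      _ ≤ Bnorm 2 (del u (Finsupp.single (p + s • u) α) - del u (Finsupp.single (p + l • u) α)) :=
          Bnorm_neg_le 2 _
      _ ≤ ((s : ℝ) + l) * (‖u‖ * ‖u‖ * ‖α‖) := this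
      _ = ((l : ℝ) + s) * (‖u‖ * ‖u‖ * ‖α‖) := by ring

lemma chain_eq (v p : E) (α : W) (m k : ℕ) (hm : (m:ℝ) ≠ 0) (hk : (k:ℝ) ≠ 0) :
    del ((m : ℝ)⁻¹ • v) (Finsupp.single p ((m : ℝ) • α))
      - del ((k : ℝ)⁻¹ • v) (Finsupp.single p ((k : ℝ) • α))
      = ∑ s ∈ Finset.range m, ∑ l ∈ Finset.range k,
          (del (((m * k : ℕ) : ℝ)⁻¹ • v)
              (Finsupp.single (p + l • (((m * k : ℕ) : ℝ)⁻¹ • v)) α)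
            - del (((m * k : ℕ) : ℝ)⁻¹ • v)
              (Finsupp.single (p + s • (((m * k : ℕ) : ℝ)⁻¹ • v)) α)) := by
  set u : E := ((m * k : ℕ) : ℝ)⁻¹ • v with hu
  have expand : ∀ (a b : ℕ), (a:ℝ) ≠ 0 → (a:ℝ)⁻¹ • v = b • u →
      del ((a:ℝ)⁻¹ • v) (Finsupp.single p ((a:ℝ) • α))
        = (a:ℝ) • ∑ l ∈ Finset.range b, del u (Finsupp.single (p + l • u) α) := by
    intro a b _ hab
    rw [hab, del_single, ← single_tele, smul_sub, Finsupp.smul_single, Finsupp.smul_single]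
  have h1 : (m:ℝ)⁻¹ • v = k • u := by
    rw [hu, ← Nat.cast_smul_eq_nsmul ℝ, smul_smul]
    congr 1
    push_cast
    field_simp
  have h2 : (k:ℝ)⁻¹ • v = m • u := by
    rw [hu, ← Nat.cast_smul_eq_nsmul ℝ, smul_smul]
    congr 1
    push_cast
    field_simp
  rw [expand m k hm h1, expand k m hk h2]
  set h : ℕ → (E →₀ W) := fun t => del u (Finsupp.single (p + t • u) α) with hh
  symm
  calc ∑ s ∈ Finset.range m, ∑ l ∈ Finset.range k, (h l - h s)
      = ∑ s ∈ Finset.range m, ((∑ l ∈ Finset.range k, h l) - k • h s) :=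
        Finset.sum_congr rfl fun s _ => by
          rw [Finset.sum_sub_distrib, Finset.sum_const, Finset.card_range]
    _ = m • (∑ l ∈ Finset.range k, h l) - k • ∑ s ∈ Finset.range m, h s := by
        rw [Finset.sum_sub_distrib, Finset.sum_const, Finset.card_range, ← Finset.smul_sum]
    _ = (m:ℝ) • (∑ l ∈ Finset.range k, h l) - (k:ℝ) • ∑ s ∈ Finset.range m, h s := by
        rw [← Nat.cast_smul_eq_nsmul ℝ m, ← Nat.cast_smul_eq_nsmul ℝ k]

lemma cauchy_bound (v p : E) (α : W) (m k : ℕ) (hm : 0 < m) (hk : 0 < k) :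
    Bnorm 2 (del ((m:ℝ)⁻¹ • v) (Finsupp.single p ((m:ℝ) • α))
      - del ((k:ℝ)⁻¹ • v) (Finsupp.single p ((k:ℝ) • α)))
      ≤ ((m:ℝ)⁻¹ + (k:ℝ)⁻¹) * (‖v‖ * ‖v‖ * ‖α‖) := by
  have hm' : (m:ℝ) ≠ 0 := Nat.cast_ne_zero.mpr hm.ne'
  have hk' : (k:ℝ) ≠ 0 := Nat.cast_ne_zero.mpr hk.ne'
  rw [chain_eq v p α m k hm' hk']
  set u : E := ((m * k : ℕ) : ℝ)⁻¹ • v with hu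
  have hun : ‖u‖ = ((m:ℝ) * (k:ℝ))⁻¹ * ‖v‖ := by
    rw [hu, norm_smul, Real.norm_eq_abs, abs_inv, Nat.abs_cast, Nat.cast_mul]
  have c0 : (0:ℝ) ≤ ‖u‖ * ‖u‖ * ‖α‖ := by positivity
  have step : Bnorm 2 (∑ s ∈ Finset.range m, ∑ l ∈ Finset.range k,
      (del u (Finsupp.single (p + l • u) α) - del u (Finsupp.single (p + s • u) α)))
      ≤ ∑ _s ∈ Finset.range m, ∑ _l ∈ Finset.range k,
          (((k:ℝ) + m) * (‖u‖ * ‖u‖ * ‖α‖)) := by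
    refine Bnorm_sum_le 2 _ _ _ fun s hs => ?_
    refine Bnorm_sum_le 2 _ _ _ fun l hl => ?_
    refine (Bnorm_pair u α p l s).trans (mul_le_mul_of_nonneg_right ?_ c0)
    have hl' : (l:ℝ) ≤ (k:ℝ) := by exact_mod_cast (Finset.mem_range.mp hl).le
    have hs' : (s:ℝ) ≤ (m:ℝ) := by exact_mod_cast (Finset.mem_range.mp hs).le
    linarith
  refine step.trans (le_of_eq ?_)
  have key : (m:ℝ) * ((k:ℝ) * (((k:ℝ) + m) * (‖u‖ * ‖u‖ * ‖α‖)))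
      = ((m:ℝ)⁻¹ + (k:ℝ)⁻¹) * (‖v‖ * ‖v‖ * ‖α‖) := by
    rw [hun]
    field_simp
  rw [← key]
  simp [Finset.sum_const, Finset.card_range, nsmul_eq_mul, mul_assoc]

lemma transl_eq (u : E) (A : E →₀ W) : transl u A = Finsupp.lmapDomain W ℝ (· + u) A := rfl

lemma del_add_vec (a b : E) (A : E →₀ W) :
    del (a + b) A = del a A + del b A + del a (del b A) := by
  have hcomp : transl (a + b) A = transl a (transl b A) := by
    rw [transl, transl, transl, ← Finsupp.mapDomain_comp]
    congr 1
    funext x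
    simp only [Function.comp]
    abel
  have hsub : transl a (transl b A - A) = transl a (transl b A) - transl a A := by
    simp only [transl_eq, map_sub]
  simp only [del, hcomp, hsub]
  abel

end PredAux


open PredAux

/-- The prederivative operator `P_v`, characterized on Dirac chains as
the limit of rescaled translation differences `t⁻¹·Δ_{t·v}` in the `B^{r+1}` completion,
is bilinear in `(v, J)` and satisfies `‖P_v(J)‖_{B^{r+1}} ≤ ‖v‖·‖J‖_{B^r}` for `r ≥ 1`.
In particular the sequence `(T_{v/i} − I)(p; i·α)` is Cauchy in the `B²` norm, so
`P_v(p;α)` is well-defined. -/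
theorem prederivative_bound_and_bilinear {n : ℕ} {W : Type*}
    [NormedAddCommGroup W] [NormedSpace ℝ W]
    (r : ℕ) (hr : 1 ≤ r)
    (X Y : Type*) [NormedAddCommGroup X] [NormedSpace ℝ X]
    [NormedAddCommGroup Y] [NormedSpace ℝ Y]
    (ιX : ((EuclideanSpace ℝ (Fin n)) →₀ W) →ₗ[ℝ] X)
    (hX : ∀ A, ‖ιX A‖ = Bnorm r A) (hXd : DenseRange ιX)
    (ιY : ((EuclideanSpace ℝ (Fin n)) →₀ W) →ₗ[ℝ] Y)
    (hY : ∀ A, ‖ιY A‖ = Bnorm (r + 1) A)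
    (P : EuclideanSpace ℝ (Fin n) → X →L[ℝ] Y)
    (hP : ∀ (v : EuclideanSpace ℝ (Fin n)) (A : (EuclideanSpace ℝ (Fin n)) →₀ W),
      Tendsto (fun t : ℝ => ιY (t⁻¹ • del (t • v) A)) (𝓝[≠] 0) (𝓝 (P v (ιX A)))) :
    (∀ (v : EuclideanSpace ℝ (Fin n)) (J : X), ‖P v J‖ ≤ ‖v‖ * ‖J‖) ∧
    (∀ (v w : EuclideanSpace ℝ (Fin n)) (J : X), P (v + w) J = P v J + P w J) ∧
    (∀ (a : ℝ) (v : EuclideanSpace ℝ (Fin n)) (J : X), P (a • v) J = a • P v J) ∧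
    (∀ (v : EuclideanSpace ℝ (Fin n)) (p : EuclideanSpace ℝ (Fin n)) (α : W),
      ∀ ε > (0 : ℝ), ∃ N : ℕ, ∀ i ≥ N, ∀ j ≥ N,
        Bnorm 2 (del ((((i : ℝ) + 1)⁻¹) • v) (Finsupp.single p (((i : ℝ) + 1) • α)) -
                 del ((((j : ℝ) + 1)⁻¹) • v) (Finsupp.single p (((j : ℝ) + 1) • α))) < ε) := by

  obtain ⟨r₀, rfl⟩ : ∃ r₀, r = r₀ + 1 := ⟨r - 1, (Nat.succ_pred_eq_of_pos hr).symm⟩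
  -- Part 1, pointwise on Dirac chains
  have bound : ∀ (v : EuclideanSpace ℝ (Fin n)) (A : EuclideanSpace ℝ (Fin n) →₀ W),
      ‖P v (ιX A)‖ ≤ ‖v‖ * ‖ιX A‖ := by
    intro v A
    refine le_of_tendsto (hP v A).norm ?_
    filter_upwards [self_mem_nhdsWithin] with t ht
    have ht' : (t : ℝ) ≠ 0 := ht
    rw [hY, hX]
    calc Bnorm (r₀ + 1 + 1) (t⁻¹ • del (t • v) A)
        ≤ |t⁻¹| * Bnorm (r₀ + 1 + 1) (del (t • v) A) := Bnorm_smul_le _ _ _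
      _ ≤ |t⁻¹| * (‖t • v‖ * Bnorm (r₀ + 1) A) :=
          mul_le_mul_of_nonneg_left (Bnorm_del_le _ _ _) (abs_nonneg _)
      _ = ‖v‖ * Bnorm (r₀ + 1) A := by
          rw [norm_smul, Real.norm_eq_abs, abs_inv]
          field_simp
  have part1 : ∀ (v : EuclideanSpace ℝ (Fin n)) (J : X), ‖P v J‖ ≤ ‖v‖ * ‖J‖ := by
    intro v J
    exact hXd.induction_on J
      (isClosed_le ((P v).continuous.norm) (continuous_const.mul continuous_norm))
      (fun A => bound v A)
  -- Part 2, pointwise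
  have add_pt : ∀ (v w : EuclideanSpace ℝ (Fin n)) (A : EuclideanSpace ℝ (Fin n) →₀ W),
      P (v + w) (ιX A) = P v (ιX A) + P w (ιX A) := by
    intro v w A
    have h3 : Tendsto (fun t : ℝ => ιY (t⁻¹ • del (t • v) (del (t • w) A))) (𝓝[≠] 0) (𝓝 0) := by
      have hb : ∀ᶠ t in 𝓝[≠] (0:ℝ), ‖ιY (t⁻¹ • del (t • v) (del (t • w) A))‖
          ≤ |t| * (‖v‖ * ‖w‖ * Bnorm r₀ A) := by
        filter_upwards [self_mem_nhdsWithin] with t ht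
        have ht' : (t : ℝ) ≠ 0 := ht
        rw [hY]
        calc Bnorm (r₀ + 1 + 1) (t⁻¹ • del (t • v) (del (t • w) A))
            ≤ |t⁻¹| * Bnorm (r₀ + 1 + 1) (del (t • v) (del (t • w) A)) := Bnorm_smul_le _ _ _
          _ ≤ |t⁻¹| * (‖t • v‖ * Bnorm (r₀ + 1) (del (t • w) A)) :=
              mul_le_mul_of_nonneg_left (Bnorm_del_le _ _ _) (abs_nonneg _)
          _ ≤ |t⁻¹| * (‖t • v‖ * (‖t • w‖ * Bnorm r₀ A)) :=
              mul_le_mul_of_nonneg_left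
                (mul_le_mul_of_nonneg_left (Bnorm_del_le _ _ _) (norm_nonneg _)) (abs_nonneg _)
          _ = |t| * (‖v‖ * ‖w‖ * Bnorm r₀ A) := by
              rw [norm_smul, norm_smul, Real.norm_eq_abs, abs_inv]
              field_simp
      have hg : Tendsto (fun t : ℝ => |t| * (‖v‖ * ‖w‖ * Bnorm r₀ A)) (𝓝[≠] 0) (𝓝 0) := by
        have habs : Tendsto (fun t : ℝ => |t|) (𝓝 (0:ℝ)) (𝓝 0) := by
          simpa using (continuous_abs.tendsto (0:ℝ))
        simpa using (habs.mono_left nhdsWithin_le_nhds).mul_const (‖v‖ * ‖w‖ * Bnorm r₀ A)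
      exact squeeze_zero_norm' hb hg
    have hsum := ((hP v A).add (hP w A)).add h3
    have hfun : (fun t : ℝ => ιY (t⁻¹ • del (t • v) A) + ιY (t⁻¹ • del (t • w) A)
        + ιY (t⁻¹ • del (t • v) (del (t • w) A)))
        = fun t : ℝ => ιY (t⁻¹ • del (t • (v + w)) A) := by
      funext t
      rw [← map_add, ← map_add]
      congr 1
      rw [smul_add t v w, del_add_vec, smul_add, smul_add]
    rw [hfun] at hsum
    have := tendsto_nhds_unique (hP (v + w) A) hsum
    simpa using this
  have part2 : ∀ (v w : EuclideanSpace ℝ (Fin n)) (J : X), P (v + w) J = P v J + P w J := by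
    intro v w J
    exact hXd.induction_on J
      (isClosed_eq (P (v + w)).continuous ((P v).continuous.add (P w).continuous))
      (fun A => add_pt v w A)
  -- Part 3, pointwise
  have smul_pt : ∀ (a : ℝ) (v : EuclideanSpace ℝ (Fin n)) (A : EuclideanSpace ℝ (Fin n) →₀ W),
      P (a • v) (ιX A) = a • P v (ιX A) := by
    intro a v A
    rcases eq_or_ne a 0 with rfl | ha
    · have h0 : Tendsto (fun t : ℝ => ιY (t⁻¹ • del (t • ((0:ℝ) • v)) A)) (𝓝[≠] 0) (𝓝 0) := by
        have hz : ∀ t : ℝ, ιY (t⁻¹ • del (t • ((0:ℝ) • v)) A) = 0 := fun t => by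
          rw [zero_smul, smul_zero, del_zero_vec, smul_zero, map_zero]
        simp only [hz]
        exact tendsto_const_nhds
      have := tendsto_nhds_unique (hP ((0:ℝ) • v) A) h0
      rw [this, zero_smul]
    · have hcomp : Tendsto (fun t : ℝ => t * a) (𝓝[≠] (0:ℝ)) (𝓝[≠] (0:ℝ)) := by
        rw [tendsto_nhdsWithin_iff]
        constructor
        · have h : Tendsto (fun t : ℝ => t * a) (𝓝 (0:ℝ)) (𝓝 (0 * a)) :=
            (continuous_id.mul (continuous_const (y := a))).tendsto (0:ℝ)
          rw [zero_mul] at h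
          exact h.mono_left nhdsWithin_le_nhds
        · filter_upwards [self_mem_nhdsWithin] with t ht
          exact mul_ne_zero ht ha
      have h2 := ((hP v A).comp hcomp).const_smul a
      have heq : (fun t : ℝ => a • ιY ((t * a)⁻¹ • del ((t * a) • v) A))
          =ᶠ[𝓝[≠] (0:ℝ)] (fun t : ℝ => ιY (t⁻¹ • del (t • (a • v)) A)) := by
        filter_upwards [self_mem_nhdsWithin] with t ht
        have ht' : (t : ℝ) ≠ 0 := ht
        show a • ιY ((t * a)⁻¹ • del ((t * a) • v) A) = ιY (t⁻¹ • del (t • (a • v)) A)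
        rw [smul_smul t a v, ← map_smul, smul_smul]
        have hsc : a * (t * a)⁻¹ = t⁻¹ := by
          field_simp
        rw [hsc]
      exact tendsto_nhds_unique (hP (a • v) A) (Filter.Tendsto.congr' heq h2)
  have part3 : ∀ (a : ℝ) (v : EuclideanSpace ℝ (Fin n)) (J : X), P (a • v) J = a • P v J := by
    intro a v J
    exact hXd.induction_on J
      (isClosed_eq (P (a • v)).continuous ((P v).continuous.const_smul a))
      (fun A => smul_pt a v A)
  refine ⟨part1, part2, part3, ?_⟩
  -- Part 4: the Cauchy estimate
  intro v p α ε hε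
  set C := ‖v‖ * ‖v‖ * ‖α‖ with hC
  have hC0 : 0 ≤ C := by positivity
  obtain ⟨N, hN⟩ := exists_nat_gt (2 * C / ε)
  refine ⟨N, fun i hi j hj => ?_⟩
  have hb := cauchy_bound v p α (i + 1) (j + 1) (Nat.succ_pos i) (Nat.succ_pos j)
  push_cast at hb
  have h1 : ((i : ℝ) + 1)⁻¹ ≤ ((N : ℝ) + 1)⁻¹ := by
    apply inv_anti₀ (by positivity)
    have : (N : ℝ) ≤ (i : ℝ) := by exact_mod_cast hi
    linarith
  have h2 : ((j : ℝ) + 1)⁻¹ ≤ ((N : ℝ) + 1)⁻¹ := by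
    apply inv_anti₀ (by positivity)
    have : (N : ℝ) ≤ (j : ℝ) := by exact_mod_cast hj
    linarith
  calc Bnorm 2 (del ((((i : ℝ) + 1)⁻¹) • v) (Finsupp.single p (((i : ℝ) + 1) • α)) -
          del ((((j : ℝ) + 1)⁻¹) • v) (Finsupp.single p (((j : ℝ) + 1) • α)))
      ≤ (((i : ℝ) + 1)⁻¹ + ((j : ℝ) + 1)⁻¹) * C := hb
    _ ≤ (((N : ℝ) + 1)⁻¹ + ((N : ℝ) + 1)⁻¹) * C :=
        mul_le_mul_of_nonneg_right (add_le_add h1 h2) hC0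
    _ = 2 * C / ((N : ℝ) + 1) := by ring
    _ < ε := by
        rw [div_lt_iff₀ (by positivity)]
        have h3 : 2 * C < (N : ℝ) * ε := by
          have := (div_lt_iff₀ hε).mp hN
          linarith
        nlinarith [hε, h3]
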